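/- arXiv:2604.12684 — 3 statements merged into one kernel-verified Lean document; each statement's English description precedes it below -/
import Mathlib

section
/- Let F be a field, let n, k, s be positive integers with k ≤ s, and let C₁ ⊇ C₂ ⊇ ⋯ ⊇ C_k be nested linear subspaces of Fⁿ such that every nonzero codeword of C_i has Hamming weight at least d_i (for given positive integers d₁, …, d_k). Let A be a k × s matrix over F that is non-singular by columns (NSC). Then every nonzero codeword of the matrix-product code C(A) has Hamming weight at least min_{1 ≤ i ≤ k} (s + 1 − i) · d_i. -/
open Matrix

/-- Hamming weight of a vector in `Fⁿ`: number of nonzero coordinates. -/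
def hwt {F : Type*} [Field F] [DecidableEq F] {n : ℕ} (v : Fin n → F) : ℕ :=
  (Finset.univ.filter fun t => v t ≠ 0).card

/-- Hamming weight of an element of `(Fⁿ)ˢ`: number of nonzero coordinates among
all `s·n` coordinates. -/
def hwtTuple {F : Type*} [Field F] [DecidableEq F] {n s : ℕ}
    (x : Fin s → (Fin n → F)) : ℕ :=
  (Finset.univ.filter fun p : Fin s × Fin n => x p.1 p.2 ≠ 0).card

theorem stmt8 (F : Type*) [Field F] [DecidableEq F] (n k s : ℕ)
    (hn : 0 < n) (hk : 0 < k) (hs : 0 < s) (hks : k ≤ s)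
    (A : Matrix (Fin k) (Fin s) F)
    -- A is non-singular by columns (NSC): for every `1 ≤ j ≤ k` and every strictly
    -- increasing choice of `j` columns, the `j × j` submatrix formed by the first
    -- `j` rows and those columns is invertible.
    (hNSC : ∀ (j : ℕ) (hj : j ≤ k), 0 < j → ∀ cols : Fin j → Fin s, StrictMono cols →
      IsUnit (A.submatrix (Fin.castLE hj) cols))
    (C : Fin k → Submodule F (Fin n → F)) (d : Fin k → ℕ) (hd : ∀ i, 0 < d i)
    -- nested codes C₁ ⊇ C₂ ⊇ ⋯ ⊇ C_k
    (hnested : ∀ i i' : Fin k, i ≤ i' → C i' ≤ C i)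
    -- every nonzero codeword of C_i has Hamming weight at least d_i
    (hwtC : ∀ i : Fin k, ∀ v ∈ C i, v ≠ 0 → d i ≤ hwt v) :
    ∀ x : Fin s → (Fin n → F),
      (∃ c : Fin k → (Fin n → F), (∀ i, c i ∈ C i) ∧
        ∀ j : Fin s, x j = ∑ i : Fin k, A i j • c i) →
      x ≠ 0 →
      Finset.univ.inf' (Finset.univ_nonempty_iff.mpr (Fin.pos_iff_nonempty.mp hk))
        (fun i : Fin k => (s + 1 - (i.val + 1)) * d i) ≤ hwtTuple x := by
  classical
  rintro x ⟨c, hcmem, hx⟩ hx0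
  -- some c i is nonzero
  have hcne : ∃ i, c i ≠ 0 := by
    by_contra h
    push_neg at h
    apply hx0
    funext j
    rw [hx j]
    simp [h]
  set E : Finset (Fin k) := Finset.univ.filter (fun i => c i ≠ 0) with hE
  have hEne : E.Nonempty := by
    obtain ⟨i, hi⟩ := hcne
    exact ⟨i, by simp [hE, hi]⟩
  set r := E.max' hEne with hr
  have hrE : r ∈ E := E.max'_mem hEne
  have hcr : c r ≠ 0 := by simpa [hE] using hrE
  have hmax : ∀ i : Fin k, r < i → c i = 0 := by
    intro i hi
    by_contra h
    exact absurd (E.le_max' i (by simp [hE, h])) (not_le.mpr hi)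
  have hj : r.val + 1 ≤ k := r.isLt
  have hrs : r.val < s := lt_of_lt_of_le r.isLt hks
  -- per-coordinate sum formula
  have hxsum : ∀ (j : Fin s) (t : Fin n), x j t = ∑ i : Fin k, A i j * c i t := by
    intro j t
    have := congrFun (hx j) t
    simpa [Finset.sum_apply, Pi.smul_apply, smul_eq_mul] using this
  -- key: for each t with c r t ≠ 0, at least s - r columns j have x j t ≠ 0
  have key : ∀ t : Fin n, c r t ≠ 0 →
      s - r.val ≤ (Finset.univ.filter fun j : Fin s => x j t ≠ 0).card := by
    intro t ht
    by_contra hlt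
    push_neg at hlt
    set Z : Finset (Fin s) := Finset.univ.filter (fun j => x j t = 0) with hZ
    have hcards : (Finset.univ.filter fun j : Fin s => x j t ≠ 0).card + Z.card = s := by
      have h := Finset.card_filter_add_card_filter_not
        (s := (Finset.univ : Finset (Fin s))) (p := fun j => x j t ≠ 0)
      simpa [hZ, not_not, Finset.card_univ] using h
    have hZcard : r.val + 1 ≤ Z.card := by omega
    set cols := Z.orderEmbOfCardLe hZcard with hcols
    have hM := hNSC (r.val + 1) hj (Nat.succ_pos _) cols (OrderEmbedding.strictMono cols)
    set M := A.submatrix (Fin.castLE hj) (⇑cols) with hMdef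
    set v : Fin (r.val + 1) → F := fun i => c (Fin.castLE hj i) t with hv
    have hxz : ∀ l : Fin (r.val + 1), x (cols l) t = 0 := by
      intro l
      have := Z.orderEmbOfCardLe_mem hZcard l
      simpa [hZ] using this
    have hvm : Matrix.vecMul v M = 0 := by
      funext l
      have hrestrict : ∑ i : Fin (r.val + 1),
          c (Fin.castLE hj i) t * A (Fin.castLE hj i) (cols l)
          = ∑ i : Fin k, A i (cols l) * c i t := by
        calc ∑ i : Fin (r.val + 1), c (Fin.castLE hj i) t * A (Fin.castLE hj i) (cols l)
            = ∑ i : Fin (r.val + 1), A (Fin.castLE hj i) (cols l) * c (Fin.castLE hj i) t :=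
              Finset.sum_congr rfl fun i _ => mul_comm _ _
          _ = ∑ i ∈ Finset.univ.map (Fin.castLEEmb hj), A i (cols l) * c i t := by
              rw [Finset.sum_map]; rfl
          _ = ∑ i : Fin k, A i (cols l) * c i t := ?_
        apply Finset.sum_subset (Finset.subset_univ _)
        intro i _ hi
        have hri : r < i := by
          by_contra hle
          push_neg at hle
          apply hi
          simp only [Finset.mem_map, Finset.mem_univ, true_and]
          exact ⟨⟨i.val, by omega⟩, by ext; simp⟩
        rw [hmax i hri]
        simp
      have h0 : ∑ i : Fin k, A i (cols l) * c i t = 0 := by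
        rw [← hxsum (cols l) t]; exact hxz l
      simp only [Matrix.vecMul, dotProduct, hMdef, Matrix.submatrix_apply, hv,
        Pi.zero_apply]
      rw [hrestrict, h0]
    have hdet : IsUnit M.det := (Matrix.isUnit_iff_isUnit_det M).mp hM
    have hv0 : v = 0 := by
      have h := congrArg (fun w => Matrix.vecMul w M⁻¹) hvm
      simpa [Matrix.vecMul_vecMul, Matrix.mul_nonsing_inv M hdet] using h
    have hlast : v ⟨r.val, Nat.lt_succ_self _⟩ = c r t := by
      have : Fin.castLE hj ⟨r.val, Nat.lt_succ_self _⟩ = r := by ext; simp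
      simp [hv, this]
    rw [hv0] at hlast
    exact ht hlast.symm
  -- count pairs fiberwise over t : Fin n
  have hsum : hwtTuple x
      = ∑ t : Fin n, (Finset.univ.filter fun j : Fin s => x j t ≠ 0).card := by
    unfold hwtTuple
    rw [Finset.card_eq_sum_card_fiberwise
      (f := fun p : Fin s × Fin n => p.2) (t := Finset.univ) (fun _ _ => Finset.mem_univ _)]
    refine Finset.sum_congr rfl fun t _ => ?_
    refine Finset.card_bij (fun p _ => p.1) ?_ ?_ ?_
    · intro p hp
      simp only [Finset.mem_filter, Finset.mem_univ, true_and] at hp ⊢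
      rw [hp.2] at hp
      exact hp.1
    · intro p hp q hq hpq
      simp only [Finset.mem_filter] at hp hq
      exact Prod.ext hpq (hp.2.trans hq.2.symm)
    · intro j hjmem
      simp only [Finset.mem_filter, Finset.mem_univ, true_and] at hjmem
      exact ⟨(j, t), by simp [hjmem], rfl⟩
  set T : Finset (Fin n) := Finset.univ.filter (fun t => c r t ≠ 0) with hT
  have hTcard : d r ≤ T.card := hwtC r (c r) (hcmem r) hcr
  have h1 : T.card * (s - r.val)
      ≤ ∑ t ∈ T, (Finset.univ.filter fun j : Fin s => x j t ≠ 0).card := by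
    have := Finset.card_nsmul_le_sum T
      (fun t => (Finset.univ.filter fun j : Fin s => x j t ≠ 0).card) (s - r.val)
      (fun t ht => key t (by simpa [hT] using ht))
    simpa [smul_eq_mul] using this
  have h2 : ∑ t ∈ T, (Finset.univ.filter fun j : Fin s => x j t ≠ 0).card
      ≤ ∑ t : Fin n, (Finset.univ.filter fun j : Fin s => x j t ≠ 0).card :=
    Finset.sum_le_sum_of_subset (Finset.subset_univ T)
  have hmin : Finset.univ.inf' (Finset.univ_nonempty_iff.mpr (Fin.pos_iff_nonempty.mp hk))
      (fun i : Fin k => (s + 1 - (i.val + 1)) * d i) ≤ (s + 1 - (r.val + 1)) * d r :=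
    Finset.inf'_le _ (Finset.mem_univ r)
  have heq : (s + 1 - (r.val + 1)) = s - r.val := by omega
  have hfin : (s - r.val) * d r ≤ T.card * (s - r.val) := by
    rw [mul_comm (s - r.val) (d r)]
    exact Nat.mul_le_mul_right _ hTcard
  rw [hsum]
  calc Finset.univ.inf' _ (fun i : Fin k => (s + 1 - (i.val + 1)) * d i)
      ≤ (s + 1 - (r.val + 1)) * d r := hmin
    _ = (s - r.val) * d r := by rw [heq]
    _ ≤ T.card * (s - r.val) := hfin
    _ ≤ _ := le_trans h1 h2
end

section
/- In F₂⁵ × F₂⁵, let g₀ = (1,1,0,0,0 | 0,0,1,0,1) and let g_k = σᵏ(g₀) for k = 1, 2, 3, where σ is the simultaneous cyclic shift. Then the four vectors g₀, g₁, g₂, g₃ are linearly independent over F₂ and pairwise satisfy ω(g_k, g_l) = 0; hence their span S̄ is a totally isotropic subspace of F₂⁵ × F₂⁵ of dimension 4. -/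
/-- The phase space `F₂⁵ × F₂⁵`. -/
abbrev V5 : Type := (Fin 5 → ZMod 2) × (Fin 5 → ZMod 2)

/-- The binary symplectic form `ω((a|b), (a'|b')) = a ⬝ b' + a' ⬝ b`. -/
def omega5 (s s' : V5) : ZMod 2 :=
  (∑ i, s.1 i * s'.2 i) + (∑ i, s'.1 i * s.2 i)

/-- The simultaneous cyclic shift `σ(a|b)_i = (a_{i-1 mod 5} | b_{i-1 mod 5})`. -/
def sigma5 (s : V5) : V5 :=
  (fun i => s.1 (i - 1), fun i => s.2 (i - 1))

/-- The base stabilizer vector `g₀ = (1,1,0,0,0 | 0,0,1,0,1)`. -/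
def g0 : V5 := (![1, 1, 0, 0, 0], ![0, 0, 1, 0, 1])

lemma omega5_symm (s s' : V5) : omega5 s s' = omega5 s' s := by
  unfold omega5; ring

lemma omega5_add_left (s t s' : V5) :
    omega5 (s + t) s' = omega5 s s' + omega5 t s' := by
  unfold omega5
  simp [Prod.fst_add, Prod.snd_add, add_mul, mul_add, Finset.sum_add_distrib]
  ring

lemma omega5_smul_left (c : ZMod 2) (s s' : V5) :
    omega5 (c • s) s' = c * omega5 s s' := by
  unfold omega5
  simp [Prod.smul_fst, Prod.smul_snd, mul_add, Finset.mul_sum, mul_assoc, mul_comm, mul_left_comm]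

lemma omega5_zero_left (s' : V5) : omega5 0 s' = 0 := by
  unfold omega5; simp

theorem stmt9 :
    LinearIndependent (ZMod 2) (fun k : Fin 4 => sigma5^[k] g0) ∧
    (∀ k l : Fin 4, omega5 (sigma5^[k] g0) (sigma5^[l] g0) = 0) ∧
    (∀ s ∈ Submodule.span (ZMod 2) (Set.range fun k : Fin 4 => sigma5^[k] g0),
      ∀ s' ∈ Submodule.span (ZMod 2) (Set.range fun k : Fin 4 => sigma5^[k] g0),
        omega5 s s' = 0) ∧
    Module.finrank (ZMod 2)
      (Submodule.span (ZMod 2) (Set.range fun k : Fin 4 => sigma5^[k] g0)) = 4 := by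
  have hind : LinearIndependent (ZMod 2) (fun k : Fin 4 => sigma5^[k] g0) := by
    rw [Fintype.linearIndependent_iff]
    decide
  have homega : ∀ k l : Fin 4, omega5 (sigma5^[k] g0) (sigma5^[l] g0) = 0 := by decide
  refine ⟨hind, homega, ?_, ?_⟩
  · intro s hs s' hs'
    induction hs using Submodule.span_induction with
    | mem x hx =>
      obtain ⟨k, rfl⟩ := hx
      induction hs' using Submodule.span_induction with
      | mem y hy => obtain ⟨l, rfl⟩ := hy; exact homega k l
      | zero => rw [omega5_symm]; exact omega5_zero_left _
      | add y z _ _ hy hz =>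
        rw [omega5_symm, omega5_add_left, omega5_symm y, omega5_symm z, hy, hz, add_zero]
      | smul c y _ hy => rw [omega5_symm, omega5_smul_left, omega5_symm, hy, mul_zero]
    | zero => exact omega5_zero_left _
    | add y z _ _ hy hz => rw [omega5_add_left, hy, hz, add_zero]
    | smul c y _ hy => rw [omega5_smul_left, hy, mul_zero]
  · rw [finrank_span_eq_card hind, Fintype.card_fin]
end

section
/- Let p = 29 and define a, b ∈ F₂^{29} (indexed by Z/29Z) by a_i = 1 if and only if i is a nonzero quadratic residue modulo 29, and b_i = 1 if and only if i is nonzero and not a quadratic residue modulo 29. Let v₀ = (a | b) ∈ F₂^{29} × F₂^{29} and v_k = σᵏ(v₀) for k = 0, 1, …, 27, where σ is the simultaneous cyclic shift. Then the twenty-eight vectors v₀, …, v₂₇ are linearly independent over F₂, and the subspace S̄ they span is totally isotropic for the binary symplectic form; in particular dim S̄ = 28. -/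
/-- The phase space `F₂²⁹ × F₂²⁹`, indexed by `Z/29Z`. -/
abbrev V29 : Type := (ZMod 29 → ZMod 2) × (ZMod 29 → ZMod 2)

/-- The binary symplectic form `ω((a|b), (a'|b')) = a ⬝ b' + a' ⬝ b`. -/
def omega29 (s s' : V29) : ZMod 2 :=
  (∑ i, s.1 i * s'.2 i) + (∑ i, s'.1 i * s.2 i)

/-- The simultaneous cyclic shift `σ(a|b)_i = (a_{i-1} | b_{i-1})`. -/
def sigma29 (s : V29) : V29 :=
  (fun i => s.1 (i - 1), fun i => s.2 (i - 1))

/-- `a_i = 1` iff `i` is a nonzero quadratic residue modulo 29. -/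
def aQR29 : ZMod 29 → ZMod 2 :=
  fun i => if i ≠ 0 ∧ ∃ x : ZMod 29, x ^ 2 = i then 1 else 0

/-- `b_i = 1` iff `i` is nonzero and not a quadratic residue modulo 29. -/
def bQR29 : ZMod 29 → ZMod 2 :=
  fun i => if i ≠ 0 ∧ ¬∃ x : ZMod 29, x ^ 2 = i then 1 else 0

/-- The base vector `v₀ = (a | b)`. -/
def v029 : V29 := (aQR29, bQR29)

def aT29 : ZMod 29 → ZMod 2 := fun i => ![0, 1, 0, 0, 1, 1, 1, 1, 0, 1, 0, 0, 0, 1, 0, 0, 1, 0, 0, 0, 1, 0, 1, 1, 1, 1, 0, 0, 1] i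
def bT29 : ZMod 29 → ZMod 2 := fun i => ![0, 0, 1, 1, 0, 0, 0, 0, 1, 0, 1, 1, 1, 0, 1, 1, 0, 1, 1, 1, 0, 1, 0, 0, 0, 0, 1, 1, 0] i
def Ninv28 : Matrix (Fin 28) (Fin 28) (ZMod 2) := !![0, 1, 0, 1, 0, 0, 0, 1, 1, 1, 0, 0, 1, 1, 0, 1, 1, 0, 0, 1, 1, 1, 0, 0, 0, 1, 0, 1;
  1, 0, 0, 0, 0, 1, 1, 0, 1, 1, 0, 1, 0, 1, 0, 0, 1, 0, 1, 0, 1, 1, 0, 1, 1, 0, 0, 0;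
  0, 0, 0, 1, 0, 0, 1, 0, 1, 0, 1, 0, 0, 1, 1, 1, 1, 1, 0, 0, 1, 0, 1, 0, 1, 0, 0, 1;
  1, 0, 1, 0, 0, 1, 1, 1, 0, 1, 1, 0, 0, 0, 0, 1, 1, 0, 0, 0, 0, 1, 1, 0, 1, 1, 1, 0;
  0, 0, 0, 0, 0, 0, 1, 0, 0, 1, 1, 1, 1, 1, 0, 1, 0, 1, 0, 1, 1, 1, 1, 1, 0, 0, 1, 0;
  0, 1, 0, 1, 0, 0, 0, 0, 1, 1, 1, 1, 0, 0, 1, 1, 0, 0, 1, 1, 0, 0, 1, 1, 1, 1, 0, 0;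
  0, 1, 1, 1, 1, 0, 0, 1, 1, 0, 1, 1, 0, 1, 0, 0, 0, 0, 0, 0, 0, 1, 0, 1, 1, 0, 1, 1;
  1, 0, 0, 1, 0, 0, 1, 0, 1, 1, 1, 0, 1, 0, 0, 0, 0, 1, 1, 0, 0, 0, 0, 1, 0, 1, 1, 1;
  1, 1, 1, 0, 0, 1, 1, 1, 0, 1, 0, 0, 0, 1, 1, 0, 0, 1, 0, 1, 0, 0, 1, 1, 0, 0, 0, 1;
  1, 1, 0, 1, 1, 1, 0, 1, 1, 0, 0, 1, 0, 0, 0, 1, 0, 1, 0, 0, 1, 0, 1, 0, 0, 0, 1, 0;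
  0, 0, 1, 1, 1, 1, 1, 1, 0, 0, 0, 0, 0, 1, 0, 1, 0, 0, 1, 1, 1, 0, 0, 1, 0, 1, 0, 0;
  0, 1, 0, 0, 1, 1, 1, 0, 0, 1, 0, 0, 1, 1, 1, 1, 0, 0, 0, 0, 0, 0, 0, 0, 1, 1, 1, 1;
  1, 0, 0, 0, 1, 0, 0, 1, 0, 0, 0, 1, 0, 1, 0, 1, 1, 1, 1, 0, 0, 0, 1, 1, 1, 1, 0, 1;
  1, 1, 1, 0, 1, 0, 1, 0, 1, 0, 1, 1, 1, 0, 0, 0, 1, 0, 0, 1, 0, 0, 1, 0, 0, 1, 0, 0;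
  0, 0, 1, 0, 0, 1, 0, 0, 1, 0, 0, 1, 0, 0, 0, 1, 1, 1, 0, 1, 0, 1, 0, 1, 0, 1, 1, 1;
  1, 0, 1, 1, 1, 1, 0, 0, 0, 1, 1, 1, 1, 0, 1, 0, 1, 0, 0, 0, 1, 0, 0, 1, 0, 0, 0, 1;
  1, 1, 1, 1, 0, 0, 0, 0, 0, 0, 0, 0, 1, 1, 1, 1, 0, 0, 1, 0, 0, 1, 1, 1, 0, 0, 1, 0;
  0, 0, 1, 0, 1, 0, 0, 1, 1, 1, 0, 0, 1, 0, 1, 0, 0, 0, 0, 0, 1, 1, 1, 1, 1, 1, 0, 0;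
  0, 1, 0, 0, 0, 1, 0, 1, 0, 0, 1, 0, 1, 0, 0, 0, 1, 0, 0, 1, 1, 0, 1, 1, 1, 0, 1, 1;
  1, 0, 0, 0, 1, 1, 0, 0, 1, 0, 1, 0, 0, 1, 1, 0, 0, 0, 1, 0, 1, 1, 1, 0, 0, 1, 1, 1;
  1, 1, 1, 0, 1, 0, 0, 0, 0, 1, 1, 0, 0, 0, 0, 1, 0, 1, 1, 1, 0, 1, 0, 0, 1, 0, 0, 1;
  1, 1, 0, 1, 1, 0, 1, 0, 0, 0, 0, 0, 0, 0, 1, 0, 1, 1, 0, 1, 1, 0, 0, 1, 1, 1, 1, 0;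
  0, 0, 1, 1, 1, 1, 0, 0, 1, 1, 0, 0, 1, 1, 0, 0, 1, 1, 1, 1, 0, 0, 0, 0, 1, 0, 1, 0;
  0, 1, 0, 0, 1, 1, 1, 1, 1, 0, 1, 0, 1, 0, 1, 1, 1, 1, 1, 0, 0, 1, 0, 0, 0, 0, 0, 0;
  0, 1, 1, 1, 0, 1, 1, 0, 0, 0, 0, 1, 1, 0, 0, 0, 0, 1, 1, 0, 1, 1, 1, 0, 0, 1, 0, 1;
  1, 0, 0, 1, 0, 1, 0, 1, 0, 0, 1, 1, 1, 1, 1, 0, 0, 1, 0, 1, 0, 1, 0, 0, 1, 0, 0, 0;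
  0, 0, 0, 1, 1, 0, 1, 1, 0, 1, 0, 1, 0, 0, 1, 0, 1, 0, 1, 1, 0, 1, 1, 0, 0, 0, 0, 1;
  1, 0, 1, 0, 0, 0, 1, 1, 1, 0, 0, 1, 1, 0, 1, 1, 0, 0, 1, 1, 1, 0, 0, 0, 1, 0, 1, 0]

lemma aQR29_eq : aQR29 = aT29 := by decide
lemma bQR29_eq : bQR29 = bT29 := by decide
lemma v029_eq : v029 = (aT29, bT29) := by
  show (aQR29, bQR29) = _; rw [aQR29_eq, bQR29_eq]

lemma shift_fst (n : ℕ) (s : V29) (x : ZMod 29) :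
    (sigma29^[n] s).1 x = s.1 (x - (n : ZMod 29)) := by
  induction n generalizing x with
  | zero => simp
  | succ n ih =>
      rw [Function.iterate_succ_apply']
      show (sigma29^[n] s).1 (x - 1) = _
      rw [ih]
      congr 1
      push_cast
      ring

set_option maxHeartbeats 4000000 in
set_option maxRecDepth 10000 in
lemma dual28 : ∀ k j : Fin 28,
    (∑ i : Fin 28, aT29 (((i : ℕ) : ZMod 29) - ((k : ℕ) : ZMod 29)) * Ninv28 i j)
      = if k = j then 1 else 0 := by decide

/-- The dual evaluation map. -/
def Phi28 : V29 →ₗ[ZMod 2] (Fin 28 → ZMod 2) where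
  toFun s := fun j => ∑ i : Fin 28, s.1 (((i : ℕ) : ZMod 29)) * Ninv28 i j
  map_add' s t := by
    funext j
    simp only [Prod.fst_add, Pi.add_apply, add_mul, Finset.sum_add_distrib]
  map_smul' c s := by
    funext j
    simp only [Prod.smul_fst, Pi.smul_apply, smul_eq_mul, RingHom.id_apply,
      Finset.mul_sum, mul_assoc]

lemma Phi28_def (s : V29) (j : Fin 28) :
    Phi28 s j = ∑ i : Fin 28, s.1 (((i : ℕ) : ZMod 29)) * Ninv28 i j := rfl

lemma Phi28_apply (k : Fin 28) (j : Fin 28) :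
    Phi28 (sigma29^[(k : ℕ)] v029) j = if k = j then 1 else 0 := by
  rw [Phi28_def]
  rw [show (∑ i : Fin 28, (sigma29^[(k : ℕ)] v029).1 (((i : ℕ) : ZMod 29)) * Ninv28 i j)
      = ∑ i : Fin 28, aT29 (((i : ℕ) : ZMod 29) - ((k : ℕ) : ZMod 29)) * Ninv28 i j from
    Finset.sum_congr rfl fun i _ => by rw [shift_fst, v029_eq]]
  exact dual28 k j

lemma LI28 : LinearIndependent (ZMod 2) (fun k : Fin 28 => sigma29^[k] v029) := by
  rw [Fintype.linearIndependent_iff]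
  intro g hg j
  have h1 : Phi28 (∑ k : Fin 28, g k • sigma29^[(k : ℕ)] v029) = 0 := by rw [hg]; simp
  rw [map_sum] at h1
  have h2 := congrFun h1 j
  simp only [map_smul, Pi.smul_apply, smul_eq_mul, Finset.sum_apply, Pi.zero_apply,
    Phi28_apply, mul_ite, mul_one, mul_zero] at h2
  rwa [Finset.sum_ite_eq' Finset.univ j g, if_pos (Finset.mem_univ j)] at h2

lemma omega_comm (s s' : V29) : omega29 s s' = omega29 s' s := by
  unfold omega29; ring

lemma omega_zero_left (u : V29) : omega29 0 u = 0 := by simp [omega29]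

lemma omega_add_left (s t u : V29) :
    omega29 (s + t) u = omega29 s u + omega29 t u := by
  simp only [omega29, Prod.fst_add, Prod.snd_add, Pi.add_apply, add_mul, mul_add,
    Finset.sum_add_distrib]
  ring

lemma omega_smul_left (c : ZMod 2) (s u : V29) :
    omega29 (c • s) u = c * omega29 s u := by
  simp only [omega29, Prod.smul_fst, Prod.smul_snd, Pi.smul_apply, smul_eq_mul, mul_add,
    Finset.mul_sum, mul_assoc, mul_left_comm]

lemma omega_sigma (s s' : V29) : omega29 (sigma29 s) (sigma29 s') = omega29 s s' := by
  unfold omega29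
  refine congrArg₂ (· + ·) ?_ ?_
  · exact (Fintype.sum_equiv (Equiv.addRight (1 : ZMod 29))
      (fun i => s.1 i * s'.2 i) (fun i => (sigma29 s).1 i * (sigma29 s').2 i)
      (fun i => by simp [sigma29])).symm
  · exact (Fintype.sum_equiv (Equiv.addRight (1 : ZMod 29))
      (fun i => s'.1 i * s.2 i) (fun i => (sigma29 s').1 i * (sigma29 s).2 i)
      (fun i => by simp [sigma29])).symm

lemma omega_sigma_iter (n : ℕ) (s s' : V29) :
    omega29 (sigma29^[n] s) (sigma29^[n] s') = omega29 s s' := by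
  induction n with
  | zero => rfl
  | succ n ih => rw [Function.iterate_succ_apply', Function.iterate_succ_apply',
      omega_sigma, ih]

lemma omega_base : ∀ d : Fin 28, omega29 ((aT29, bT29) : V29) (sigma29^[(d : ℕ)] (aT29, bT29)) = 0 := by
  decide

lemma omega_vv (k k' : Fin 28) :
    omega29 (sigma29^[(k : ℕ)] v029) (sigma29^[(k' : ℕ)] v029) = 0 := by
  have key : ∀ k k' : Fin 28, (k : ℕ) ≤ (k' : ℕ) →
      omega29 (sigma29^[(k : ℕ)] v029) (sigma29^[(k' : ℕ)] v029) = 0 := by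
    intro k k' h
    have hd : (k' : ℕ) - (k : ℕ) < 28 := lt_of_le_of_lt (Nat.sub_le _ _) k'.isLt
    have hk' : (k' : ℕ) = (k : ℕ) + ((k' : ℕ) - (k : ℕ)) := (Nat.add_sub_cancel' h).symm
    rw [hk', Function.iterate_add_apply, omega_sigma_iter, v029_eq]
    exact omega_base ⟨(k' : ℕ) - (k : ℕ), hd⟩
  rcases le_total (k : ℕ) (k' : ℕ) with h | h
  · exact key k k' h
  · rw [omega_comm]; exact key k' k h

theorem stmt14 :
    LinearIndependent (ZMod 2) (fun k : Fin 28 => sigma29^[k] v029) ∧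
    (∀ s ∈ Submodule.span (ZMod 2) (Set.range fun k : Fin 28 => sigma29^[k] v029),
      ∀ s' ∈ Submodule.span (ZMod 2) (Set.range fun k : Fin 28 => sigma29^[k] v029),
        omega29 s s' = 0) ∧
    Module.finrank (ZMod 2)
      (Submodule.span (ZMod 2) (Set.range fun k : Fin 28 => sigma29^[k] v029)) = 28 := by
  refine ⟨LI28, ?_, ?_⟩
  · intro s hs s' hs'
    have hgen : ∀ k : Fin 28,
        ∀ t ∈ Submodule.span (ZMod 2) (Set.range fun k : Fin 28 => sigma29^[k] v029),
          omega29 (sigma29^[(k : ℕ)] v029) t = 0 := by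
      intro k t ht
      refine Submodule.span_induction ?_ ?_ ?_ ?_ ht
      · rintro x ⟨k', rfl⟩; exact omega_vv k k'
      · rw [omega_comm]; exact omega_zero_left _
      · intro x y _ _ hx hy
        rw [omega_comm, omega_add_left, omega_comm x, omega_comm y, hx, hy, add_zero]
      · intro c x _ hx
        rw [omega_comm, omega_smul_left, omega_comm, hx, mul_zero]
    refine Submodule.span_induction ?_ ?_ ?_ ?_ hs
    · rintro x ⟨k, rfl⟩; exact hgen k s' hs'
    · exact omega_zero_left s'
    · intro x y _ _ hx hy; rw [omega_add_left, hx, hy, add_zero]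
    · intro c x _ hx; rw [omega_smul_left, hx, mul_zero]
  · rw [finrank_span_eq_card LI28, Fintype.card_fin]
end
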